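/- For n symmetric firms with linear cost c < α in a single Cournot market with inverse demand p(d) = α - βd, the efficient social welfare is (α - c)²/(2β), and the price of anarchy (ratio of efficient social welfare to Nash equilibrium social welfare) equals 1 + 1/((n+1)² - 1). -/
import Mathlib


/-- Symmetric linear-cost single-market Cournot: the efficient social welfare is
`(α - c)²/(2β)` and the price of anarchy equals `1 + 1/((n+1)² - 1)`. -/
theorem stmt1 (n : ℕ) (hn : 1 ≤ n) (α β c : ℝ) (hc : 0 ≤ c) (hcα : c < α) (hβ : 0 < β)
    (SW : (Fin n → ℝ) → ℝ)
    (hSW : ∀ q, SW q = α * (∑ j, q j) - β * (∑ j, q j) ^ 2 / 2 - ∑ i, c * q i)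
    (qNE : Fin n → ℝ) (hq : ∀ i, qNE i = (α - c) / (β * ((n : ℝ) + 1))) :
    IsGreatest {w : ℝ | ∃ q : Fin n → ℝ, (∀ i, 0 ≤ q i) ∧ w = SW q}
      ((α - c) ^ 2 / (2 * β)) ∧
    (α - c) ^ 2 / (2 * β) / SW qNE = 1 + 1 / (((n : ℝ) + 1) ^ 2 - 1) := by
  have hn1 : (1 : ℝ) ≤ (n : ℝ) := by exact_mod_cast hn
  have hA : 0 < α - c := by linarith
  constructor
  · constructor
    · refine ⟨fun _ => (α - c) / (β * n), fun i => by positivity, ?_⟩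
      rw [hSW]
      rw [Finset.sum_const, Finset.sum_const]
      simp only [Finset.card_univ, Fintype.card_fin, nsmul_eq_mul]
      have hβn : β * n ≠ 0 := by positivity
      field_simp
      ring
    · rintro w ⟨q, hq0, rfl⟩
      rw [hSW]
      have hcs : ∑ i, c * q i = c * ∑ i, q i := by rw [Finset.mul_sum]
      rw [hcs]
      set S := ∑ j, q j with hS
      rw [le_div_iff₀ (by positivity : (0:ℝ) < 2*β)]
      nlinarith [sq_nonneg (β * S - (α - c)), sq_nonneg S]
  · have hSWne : SW qNE = (α - c) ^ 2 * (n * (n + 2)) / (2 * β * ((n : ℝ) + 1) ^ 2) := by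
      rw [hSW]
      have hsum : ∑ j, qNE j = n * ((α - c) / (β * ((n : ℝ) + 1))) := by
        simp [hq, Finset.sum_const, Finset.card_univ, nsmul_eq_mul]
      have hcs : ∑ i, c * qNE i = c * ∑ i, qNE i := by rw [Finset.mul_sum]
      rw [hcs, hsum]
      have h1 : β * ((n : ℝ) + 1) ≠ 0 := by positivity
      field_simp
      ring
    rw [hSWne]
    have h1 : ((n : ℝ) + 1) ^ 2 ≠ 0 := by positivity
    have h2 : (n : ℝ) * (n + 2) ≠ 0 := by positivity
    have h3 : ((n : ℝ) + 1) ^ 2 - 1 ≠ 0 := by nlinarith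
    have h4 : (α - c) ^ 2 ≠ 0 := by positivity
    field_simp
    ring
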